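/- In the alternative algorithm with c 0 = 0, c (k+1) = (A * b k + c k) / 10 and r k = (A * b k + c k) mod 10, the digits r i for i < k are unchanged if the algorithm is continued: they depend only on b 0, …, b k and A, and each r k equals the k-th base-10 digit of A * (∑ j in range (k+1), b j * 10^j) whenever that digit position is below k+1. Formally: for i ≤ k, r i = (A * ∑ j in range (k+1), b j * 10^j) / 10^i mod 10. -/

import Mathlib

theorem stmt10 (A : ℕ) (b c r : ℕ → ℕ)
    (hb : ∀ j, b j ≤ 9)
    (hc0 : c 0 = 0)
    (hr : ∀ k, r k = (A * b k + c k) % 10)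
    (hc : ∀ k, c (k + 1) = (A * b k + c k) / 10) :
    ∀ k, ∀ i ≤ k,
      r i = (A * ∑ j ∈ Finset.range (k + 1), b j * 10 ^ j) / 10 ^ i % 10 := by
  -- key invariant
  have key : ∀ k, A * ∑ j ∈ Finset.range (k + 1), b j * 10 ^ j
      = (∑ j ∈ Finset.range (k + 1), r j * 10 ^ j) + c (k + 1) * 10 ^ (k + 1) := by
    intro k
    induction k with
    | zero =>
      simp [hr 0, hc 0, hc0]
      omega
    | succ n ih =>
      rw [Finset.sum_range_succ, Finset.sum_range_succ _ (n+1), Nat.mul_add, ih]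
      have h1 : r (n+1) = (A * b (n+1) + c (n+1)) % 10 := hr (n+1)
      have h2 : c (n+2) = (A * b (n+1) + c (n+1)) / 10 := hc (n+1)
      have h3 : (A * b (n+1) + c (n+1)) % 10 + 10 * ((A * b (n+1) + c (n+1)) / 10)
          = A * b (n+1) + c (n+1) := Nat.mod_add_div _ _
      have : A * (b (n+1) * 10 ^ (n+1)) = (A * b (n+1)) * 10 ^ (n+1) := by ring
      rw [this]
      rw [h1, h2]
      have : 10 ^ (n + 1 + 1) = 10 * 10 ^ (n + 1) := by ring
      rw [this]
      have e : (A * b (n+1) + c (n+1)) % 10 * 10 ^ (n+1)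
          + (A * b (n+1) + c (n+1)) / 10 * (10 * 10 ^ (n+1))
          = (A * b (n+1) + c (n+1)) * 10 ^ (n+1) := by
        rw [show ∀ a P : ℕ, a % 10 * P + a / 10 * (10 * P) = (a % 10 + 10 * (a / 10)) * P
          from fun a P => by ring, h3]
      linarith [e]
  have hrle : ∀ j, r j ≤ 9 := by
    intro j; rw [hr j]; omega
  intro k i hik
  rw [key k]
  -- split sum at i
  have hsplit : ∑ j ∈ Finset.range (k + 1), r j * 10 ^ j
      = (∑ j ∈ Finset.range i, r j * 10 ^ j)
        + 10 ^ i * ∑ j ∈ Finset.range (k + 1 - i), r (i + j) * 10 ^ j := by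
    rw [Finset.sum_range_add_sum_Ico _ (by omega : i ≤ k + 1) |>.symm]
    congr 1
    rw [Finset.mul_sum]
    rw [Finset.sum_Ico_eq_sum_range]
    apply Finset.sum_congr rfl
    intro j hj
    rw [pow_add]; ring
  have hT : (∑ j ∈ Finset.range i, r j * 10 ^ j) < 10 ^ i := by
    calc (∑ j ∈ Finset.range i, r j * 10 ^ j)
        ≤ ∑ j ∈ Finset.range i, 9 * 10 ^ j := by
          apply Finset.sum_le_sum; intro j _; exact Nat.mul_le_mul_right _ (hrle j)
      _ < 10 ^ i := by
          have g : ∀ n : ℕ, (∑ j ∈ Finset.range n, 9 * 10 ^ j) + 1 = 10 ^ n := by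
            intro n
            induction n with
            | zero => simp
            | succ m ihm =>
              rw [Finset.sum_range_succ, pow_succ]
              omega
          have := g i
          omega
  rw [hsplit]
  have hki : k + 1 - i = (k - i) + 1 := by omega
  rw [hki, Finset.sum_range_succ']
  simp only [add_zero, pow_zero, mul_one]
  have h10 : 10 ^ (k + 1) = 10 ^ i * 10 ^ (k + 1 - i) := by
    rw [← pow_add]; congr 1; omega
  rw [h10]
  set T := ∑ j ∈ Finset.range i, r j * 10 ^ j
  set M := ∑ j ∈ Finset.range (k - i), r (i + (j + 1)) * 10 ^ (j + 1)
  -- expression: T + 10^i * (M + r i) + c (k+1) * (10^i * 10^(k+1-i))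
  have harr : T + 10 ^ i * (M + r i) + c (k + 1) * (10 ^ i * 10 ^ (k + 1 - i))
      = T + 10 ^ i * (M + r i + c (k + 1) * 10 ^ (k + 1 - i)) := by ring
  rw [harr, Nat.add_mul_div_left _ _ ((Nat.pow_pos (n := i) (by norm_num))),
      Nat.div_eq_of_lt hT, Nat.zero_add]
  -- now show r i = (M + r i + c (k+1) * 10^(k+1-i)) % 10
  have h10M : 10 ∣ M := by
    apply Finset.dvd_sum
    intro j _
    exact Dvd.dvd.mul_left (dvd_pow_self 10 (Nat.succ_ne_zero j)) _
  have h10c : (10:ℕ) ∣ c (k + 1) * 10 ^ (k + 1 - i) := by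
    apply Dvd.dvd.mul_left
    exact dvd_pow_self 10 (by omega : k + 1 - i ≠ 0)
  have := hrle i
  omega
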